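/- Let V be a vector space over a field, W a subspace, and S(W) a subsemigroup of L(W) with I_W ∈ S(W). If S(W) is a subgroup of Aut(W) and dim(V/W) is finite, then L_{S(W)}(V) is a unit-regular monoid. -/

import Mathlib

open Set

/-- `S` is a subsemigroup of `L(M)` (closed under composition). -/
def LIsSubsemigroup {K M : Type*} [Field K] [AddCommGroup M] [Module K M]
    (S : Set (M →ₗ[K] M)) : Prop :=
  ∀ a ∈ S, ∀ b ∈ S, a ∘ₗ b ∈ S

/-- `S` is a subgroup of `Aut(M)`. -/
def LIsSubgroupOfAut {K M : Type*} [Field K] [AddCommGroup M] [Module K M]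
    (S : Set (M →ₗ[K] M)) : Prop :=
  LIsSubsemigroup S ∧ (∀ a ∈ S, Function.Bijective a) ∧ (LinearMap.id ∈ S) ∧
    ∀ a ∈ S, ∃ b ∈ S, a ∘ₗ b = LinearMap.id ∧ b ∘ₗ a = LinearMap.id

/-- `S` is a regular semigroup of linear maps: `∀ a ∈ S, ∃ b ∈ S, aba = a`
(composed left to right, i.e. `x ↦ a (b (a x))`). -/
def LIsRegularOn {K M : Type*} [Field K] [AddCommGroup M] [Module K M]
    (S : Set (M →ₗ[K] M)) : Prop :=
  ∀ a ∈ S, ∃ b ∈ S, a ∘ₗ b ∘ₗ a = a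

/-- `S` is an inverse semigroup of linear maps. -/
def LIsInverseOn {K M : Type*} [Field K] [AddCommGroup M] [Module K M]
    (S : Set (M →ₗ[K] M)) : Prop :=
  ∀ a ∈ S, ∃! b, b ∈ S ∧ a ∘ₗ b ∘ₗ a = a ∧ b ∘ₗ a ∘ₗ b = b

/-- `u` is a unit of the linear monoid `S`. -/
def LIsUnitOn {K M : Type*} [Field K] [AddCommGroup M] [Module K M]
    (S : Set (M →ₗ[K] M)) (u : M →ₗ[K] M) : Prop :=
  u ∈ S ∧ ∃ v ∈ S, u ∘ₗ v = LinearMap.id ∧ v ∘ₗ u = LinearMap.id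

/-- `a` is a unit-regular element of `S`. -/
def LUnitRegularElem {K M : Type*} [Field K] [AddCommGroup M] [Module K M]
    (S : Set (M →ₗ[K] M)) (a : M →ₗ[K] M) : Prop :=
  ∃ u, LIsUnitOn S u ∧ a ∘ₗ u ∘ₗ a = a

/-- `S` is a unit-regular linear monoid. -/
def LIsUnitRegularOn {K M : Type*} [Field K] [AddCommGroup M] [Module K M]
    (S : Set (M →ₗ[K] M)) : Prop :=
  ∀ a ∈ S, LUnitRegularElem S a

/-- `G` is a subgroup contained in the semigroup `S` of linear maps. -/
def LIsSubgroupIn {K M : Type*} [Field K] [AddCommGroup M] [Module K M]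
    (S G : Set (M →ₗ[K] M)) : Prop :=
  G ⊆ S ∧ (∀ a ∈ G, ∀ b ∈ G, a ∘ₗ b ∈ G) ∧
    ∃ e ∈ G, (∀ a ∈ G, a ∘ₗ e = a ∧ e ∘ₗ a = a) ∧
      ∀ a ∈ G, ∃ b ∈ G, a ∘ₗ b = e ∧ b ∘ₗ a = e

/-- `S` is a completely regular semigroup of linear maps: every element
belongs to a subgroup of `S`. -/
def LIsCompletelyRegularOn {K M : Type*} [Field K] [AddCommGroup M] [Module K M]
    (S : Set (M →ₗ[K] M)) : Prop :=
  ∀ a ∈ S, ∃ G, LIsSubgroupIn S G ∧ a ∈ G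

/-- The semigroup `L_{S(W)}(V)` of all linear self-maps of `V` that leave `W`
invariant and whose restriction to `W` lies in `S`. -/
def LSemi {K V : Type*} [Field K] [AddCommGroup V] [Module K V] (W : Submodule K V)
    (S : Set (W →ₗ[K] W)) : Set (V →ₗ[K] V) :=
  {f | ∃ h : ∀ x ∈ W, f x ∈ W, f.restrict h ∈ S}

theorem stmt14 {K V : Type*} [Field K] [AddCommGroup V] [Module K V]
    (W : Submodule K V) (S : Set (W →ₗ[K] W)) (hid : LinearMap.id ∈ S)
    (hgrp : LIsSubgroupOfAut S) (hfin : Module.Finite K (V ⧸ W)) :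
    LIsUnitRegularOn (LSemi W S) := by
  classical
  obtain ⟨hsemi, hbij, hidS, hinv⟩ := hgrp
  intro f hf
  obtain ⟨hfW, hfS⟩ := hf
  have hfres := hbij _ hfS
  set N := LinearMap.ker f with hNdef
  set R := LinearMap.range f with hRdef
  have hNW : N ⊓ W = ⊥ := by
    rw [eq_bot_iff]
    intro x hx
    obtain ⟨hxN, hxW⟩ := Submodule.mem_inf.mp hx
    have h0 : f.restrict hfW ⟨x, hxW⟩ = 0 := by
      apply Subtype.ext
      simpa [LinearMap.restrict_apply] using (show f x = 0 from hxN)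
    have h1 : (⟨x, hxW⟩ : W) = 0 := hfres.1 (by simpa using h0)
    simpa [Submodule.mem_bot] using congrArg Subtype.val h1
  have hWR : W ≤ R := by
    intro w hw
    obtain ⟨w', hw'⟩ := hfres.2 ⟨w, hw⟩
    have : f (w' : V) = w := by
      simpa [LinearMap.restrict_apply, Subtype.ext_iff] using hw'
    exact ⟨w', this⟩
  have hcomap : Submodule.comap f W = N ⊔ W := by
    apply le_antisymm
    · intro x hx
      obtain ⟨w', hw'⟩ := hfres.2 ⟨f x, hx⟩
      have hfw : f (w' : V) = f x := by
        simpa [LinearMap.restrict_apply, Subtype.ext_iff] using hw'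
      rw [Submodule.mem_sup]
      refine ⟨x - w', ?_, w', w'.2, by abel⟩
      simp [hNdef, LinearMap.mem_ker, map_sub, hfw]
    · rw [sup_le_iff]
      constructor
      · intro x hx
        simp only [Submodule.mem_comap]
        have : f x = 0 := hx
        simp [this]
      · intro x hx
        exact hfW x hx
  obtain ⟨C', hC'⟩ := Submodule.exists_isCompl (N ⊔ W)
  set C := W ⊔ C' with hCdef
  have hWC : W ≤ C := le_sup_left
  have hNC : IsCompl N C := by
    constructor
    · rw [disjoint_iff, eq_bot_iff]
      intro x hx
      obtain ⟨hxN, hxC⟩ := Submodule.mem_inf.mp hx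
      obtain ⟨w, hw, c', hc', rfl⟩ := Submodule.mem_sup.mp hxC
      have hc'0 : c' ∈ (N ⊔ W) ⊓ C' := by
        constructor
        · have : c' = (w + c') - w := by abel
          rw [this]
          exact sub_mem (Submodule.mem_sup_left hxN) (Submodule.mem_sup_right hw)
        · exact hc'
      rw [disjoint_iff.mp hC'.disjoint] at hc'0
      have hc'z : c' = 0 := hc'0
      subst hc'z
      have : w ∈ N ⊓ W := ⟨by simpa using hxN, hw⟩
      rw [hNW] at this
      simpa using this
    · rw [codisjoint_iff, hCdef, ← sup_assoc, codisjoint_iff.mp hC'.codisjoint]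
  set g : C →ₗ[K] R := (f.domRestrict C).codRestrict R (fun c => ⟨c, rfl⟩) with hgdef
  have hgapp : ∀ c : C, (g c : V) = f (c : V) := fun c => rfl
  have hg : Function.Bijective g := by
    constructor
    · intro a b hab
      have h1 : f ((a : V) - b) = 0 := by
        rw [map_sub, sub_eq_zero]
        rw [← hgapp a, ← hgapp b, hab]
      have : (a : V) - b ∈ N ⊓ C := ⟨h1, sub_mem a.2 b.2⟩
      rw [disjoint_iff.mp hNC.disjoint] at this
      exact Subtype.ext (by simpa [sub_eq_zero] using this)
    · rintro ⟨r, v, rfl⟩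
      have hv : v ∈ N ⊔ C := by rw [codisjoint_iff.mp hNC.codisjoint]; trivial
      obtain ⟨n, hn, c, hc, rfl⟩ := Submodule.mem_sup.mp hv
      refine ⟨⟨c, hc⟩, Subtype.ext ?_⟩
      rw [hgapp]
      have hn0 : f n = 0 := hn
      simp [hn0]
  set e1 : C ≃ₗ[K] R := LinearEquiv.ofBijective g hg with he1
  have he1app : ∀ c : C, (e1 c : V) = f (c : V) := fun c => rfl
  -- finite dimensionality
  haveI : Module.Finite K (V ⧸ W) := hfin
  have hle : W ≤ Submodule.comap f W := fun x hx => hfW x hx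
  set fbar := Submodule.mapQ W W f hle with hfbar
  have hker : LinearMap.ker fbar = N.map W.mkQ := by
    ext q
    obtain ⟨x, rfl⟩ := Submodule.Quotient.mk_surjective W q
    simp only [hfbar, LinearMap.mem_ker, Submodule.mapQ_apply, Submodule.Quotient.mk_eq_zero,
      Submodule.mem_map, Submodule.mkQ_apply]
    constructor
    · intro h
      have hx' : x ∈ N ⊔ W := by rw [← hcomap]; exact h
      obtain ⟨n, hn, w, hw, rfl⟩ := Submodule.mem_sup.mp hx'
      refine ⟨n, hn, ?_⟩
      rw [Submodule.Quotient.eq]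
      simpa using Submodule.neg_mem W hw
    · rintro ⟨n, hn, hnx⟩
      rw [Submodule.Quotient.eq] at hnx
      have hfn : f n = 0 := hn
      have : f (n - x) ∈ W := hfW _ hnx
      rw [map_sub, hfn, zero_sub] at this
      simpa using Submodule.neg_mem W this
  have hrange : LinearMap.range fbar = R.map W.mkQ := by
    ext q
    constructor
    · rintro ⟨a, rfl⟩
      obtain ⟨x, rfl⟩ := Submodule.Quotient.mk_surjective W a
      exact ⟨f x, ⟨x, rfl⟩, by simp [hfbar, Submodule.mapQ_apply]⟩
    · rintro ⟨r, ⟨x, rfl⟩, rfl⟩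
      exact ⟨Submodule.Quotient.mk x, by simp [hfbar, Submodule.mapQ_apply]⟩
  have hNinj : Function.Injective (W.mkQ.domRestrict N) := by
    intro a b hab
    have h1 : W.mkQ ((a : V) - b) = 0 := by
      rw [map_sub, sub_eq_zero]
      exact hab
    have h2 : (a : V) - b ∈ W := by
      rwa [← Submodule.ker_mkQ W]
    have : (a : V) - b ∈ N ⊓ W := ⟨sub_mem a.2 b.2, h2⟩
    rw [hNW] at this
    exact Subtype.ext (by simpa [sub_eq_zero] using this)
  have eN : N ≃ₗ[K] (N.map W.mkQ) := by
    have h := LinearEquiv.ofInjective (W.mkQ.domRestrict N) hNinj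
    rwa [LinearMap.range_domRestrict] at h
  obtain ⟨D, hRD⟩ := Submodule.exists_isCompl R
  have eD : D ≃ₗ[K] ((V ⧸ W) ⧸ (Submodule.map W.mkQ R)) :=
    (Submodule.quotientEquivOfIsCompl R D hRD).symm.trans
      (Submodule.quotientQuotientEquivQuotient W R hWR).symm
  haveI : FiniteDimensional K N := Module.Finite.equiv eN.symm
  haveI : FiniteDimensional K D := Module.Finite.equiv eD.symm
  have hfr : Module.finrank K D = Module.finrank K N := by
    have h1 := LinearMap.finrank_range_add_finrank_ker fbar
    have h2 := Submodule.finrank_quotient_add_finrank (Submodule.map W.mkQ R)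
    rw [hker, hrange] at h1
    rw [eD.finrank_eq, eN.finrank_eq]
    omega
  set θ : D ≃ₗ[K] N := LinearEquiv.ofFinrankEq _ _ hfr with hθ
  set u : V ≃ₗ[K] V :=
    ((Submodule.prodEquivOfIsCompl R D hRD).symm.trans (e1.symm.prodCongr θ)).trans
      (Submodule.prodEquivOfIsCompl C N hNC.symm) with hu
  have hprodRD : ∀ (x : R) (y : D),
      (Submodule.prodEquivOfIsCompl R D hRD) (x, y) = (x : V) + y := fun _ _ => rfl
  have hprodCN : ∀ (x : C) (y : N),
      (Submodule.prodEquivOfIsCompl C N hNC.symm) (x, y) = (x : V) + y := fun _ _ => rfl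
  have key : ∀ c : V, c ∈ C → u (f c) = c := by
    intro c hc
    have h1 : (Submodule.prodEquivOfIsCompl R D hRD).symm (f c) = (e1 ⟨c, hc⟩, 0) := by
      rw [LinearEquiv.symm_apply_eq, hprodRD]
      simp only [Submodule.coe_zero, add_zero]
      exact (he1app ⟨c, hc⟩).symm
    rw [hu]
    simp only [LinearEquiv.trans_apply, h1, LinearEquiv.prodCongr_apply,
      LinearEquiv.symm_apply_apply, map_zero]
    rw [hprodCN]
    simp
  have hfuf : ∀ v : V, f (u (f v)) = f v := by
    intro v
    have hv : v ∈ N ⊔ C := by rw [codisjoint_iff.mp hNC.codisjoint]; trivial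
    obtain ⟨n, hn, c, hc, rfl⟩ := Submodule.mem_sup.mp hv
    have hn0 : f n = 0 := hn
    have hfc : f (n + c) = f c := by simp [hn0]
    rw [hfc, key c hc]
  have hsurjW : ∀ w : V, w ∈ W → ∃ w', w' ∈ W ∧ f w' = w ∧ u w = w' := by
    intro w hw
    obtain ⟨w', hw'⟩ := hfres.2 ⟨w, hw⟩
    have hfw' : f (w' : V) = w := by
      simpa [LinearMap.restrict_apply, Subtype.ext_iff] using hw'
    exact ⟨w', w'.2, hfw', by rw [← hfw', key _ (hWC w'.2)]⟩
  have hWu : ∀ x ∈ W, (u : V →ₗ[K] V) x ∈ W := by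
    intro x hx
    obtain ⟨w', hw', _, hux⟩ := hsurjW x hx
    simpa [hux] using hw'
  have hfu_id : ∀ x ∈ W, f (u x) = x := by
    intro x hx
    obtain ⟨w', _, hfw', hux⟩ := hsurjW x hx
    rw [hux, hfw']
  obtain ⟨b, hbS, hb1, hb2⟩ := hinv _ hfS
  have hcomp1 : (f.restrict hfW) ∘ₗ ((u : V →ₗ[K] V).restrict hWu) = LinearMap.id := by
    apply LinearMap.ext
    intro x
    apply Subtype.ext
    simp only [LinearMap.comp_apply, LinearMap.restrict_apply, LinearMap.id_apply,
      LinearEquiv.coe_coe]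
    exact hfu_id x x.2
  have hub : (u : V →ₗ[K] V).restrict hWu = b := by
    have h := congrArg (fun t => b ∘ₗ t) hcomp1
    rwa [← LinearMap.comp_assoc, hb2, LinearMap.id_comp, LinearMap.comp_id] at h
  have husymm : ∀ x ∈ W, u.symm x = f x := by
    intro x hx
    apply u.injective
    rw [LinearEquiv.apply_symm_apply, key x (hWC hx)]
  have hWus : ∀ x ∈ W, (u.symm : V →ₗ[K] V) x ∈ W := by
    intro x hx
    simp only [LinearEquiv.coe_coe]
    rw [husymm x hx]
    exact hfW x hx
  have hres_symm : (u.symm : V →ₗ[K] V).restrict hWus = f.restrict hfW := by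
    apply LinearMap.ext
    intro x
    apply Subtype.ext
    simp only [LinearMap.restrict_apply, LinearEquiv.coe_coe]
    exact husymm x x.2
  refine ⟨(u : V →ₗ[K] V), ⟨⟨hWu, by rw [hub]; exact hbS⟩,
    (u.symm : V →ₗ[K] V), ⟨hWus, by rw [hres_symm]; exact hfS⟩, ?_, ?_⟩, ?_⟩
  · apply LinearMap.ext; intro x
    simp [LinearEquiv.apply_symm_apply]
  · apply LinearMap.ext; intro x
    simp [LinearEquiv.symm_apply_apply]
  · apply LinearMap.ext; intro x
    simpa using hfuf x
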